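/- Let (r_k) be a non-increasing sequence of positive real numbers converging to 0, let α ∈ (0, 1] and β > 0, and suppose there exists N ∈ ℕ such that r_k^α ≤ β(r_k − r_{k+1}) for all k ≥ N. Then β > 1 and (r_k) converges linearly to 0 with rate 1 − 1/β: there exists a constant c > 0 such that r_k ≤ c·(1 − 1/β)^k for all k ∈ ℕ. -/
import Mathlib


open Filter Topology

/-- Lemma on convergence rates (`r_k^α ≤ β(r_k − r_{k+1})`),
case `α ∈ (0,1]`: `β > 1` and linear convergence with rate `1 − 1/β`. -/
theorem stmt_12
    (r : ℕ → ℝ) (hmono : ∀ k, r (k + 1) ≤ r k) (hpos : ∀ k, 0 < r k)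
    (hto0 : Tendsto r atTop (𝓝 0))
    (α β : ℝ) (hα : α ∈ Set.Ioc (0 : ℝ) 1) (hβ : 0 < β)
    (N : ℕ) (hrec : ∀ k, N ≤ k → r k ^ α ≤ β * (r k - r (k + 1))) :
    1 < β ∧ ∃ c > 0, ∀ k : ℕ, r k ≤ c * (1 - 1 / β) ^ k := by
  obtain ⟨hα0, hα1⟩ := hα
  have hanti : ∀ m n : ℕ, m ≤ n → r n ≤ r m := by
    intro m n h
    induction n with
    | zero => simp_all
    | succ n ih =>
      rcases Nat.lt_or_ge m (n+1) with h' | h'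
      · exact le_trans (hmono n) (ih (Nat.lt_succ_iff.mp h'))
      · have : m = n + 1 := le_antisymm h h'
        simp [this]
  -- find M with r M < 1
  obtain ⟨M, hM⟩ := (hto0.eventually (eventually_lt_nhds zero_lt_one)).exists_forall_of_atTop
  set k0 := max N M with hk0
  have hsmall : ∀ k, k0 ≤ k → r k < 1 := fun k hk =>
    lt_of_le_of_lt (hanti M k (le_trans (le_max_right _ _) hk)) (hM M le_rfl)
  have hkey : ∀ k, k0 ≤ k → r k ≤ β * (r k - r (k + 1)) := by
    intro k hk
    have h1 : r k ≤ r k ^ α := by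
      calc r k = r k ^ (1 : ℝ) := (Real.rpow_one _).symm
        _ ≤ r k ^ α := Real.rpow_le_rpow_of_exponent_ge (hpos k) (hsmall k hk).le hα1
    exact h1.trans (hrec k (le_trans (le_max_left _ _) hk))
  have hβ1 : 1 < β := by
    have h := hkey k0 le_rfl
    have h1 := hpos k0
    have h2 := hpos (k0 + 1)
    nlinarith
  have hb1 : 1 / β < 1 := by rw [div_lt_one hβ]; exact hβ1
  have hb0 : 0 < 1 / β := by positivity
  have hq0 : 0 < 1 - 1 / β := by linarith
  have hq1 : 1 - 1 / β < 1 := by linarith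
  have hstep : ∀ k, k0 ≤ k → r (k + 1) ≤ (1 - 1 / β) * r k := by
    intro k hk
    have h := hkey k hk
    have hβ' : β ≠ 0 := ne_of_gt hβ
    have h2 : β * r (k + 1) ≤ (β - 1) * r k := by nlinarith
    have h3 := mul_le_mul_of_nonneg_left h2 (le_of_lt (inv_pos.mpr hβ))
    have h6 : β⁻¹ * (β * r (k + 1)) = r (k + 1) := by field_simp
    have h7 : β⁻¹ * ((β - 1) * r k) = (1 - 1 / β) * r k := by field_simp
    linarith
  have hiter : ∀ n : ℕ, r (k0 + n) ≤ r k0 * (1 - 1 / β) ^ n := by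
    intro n
    induction n with
    | zero => simp
    | succ n ih =>
      calc r (k0 + (n + 1)) = r ((k0 + n) + 1) := by ring_nf
        _ ≤ (1 - 1 / β) * r (k0 + n) := hstep _ (Nat.le_add_right _ _)
        _ ≤ (1 - 1 / β) * (r k0 * (1 - 1 / β) ^ n) := by nlinarith
        _ = r k0 * (1 - 1 / β) ^ (n + 1) := by ring
  refine ⟨hβ1, r 0 / (1 - 1 / β) ^ k0, div_pos (hpos 0) (pow_pos hq0 k0), fun k => ?_⟩
  rcases Nat.lt_or_ge k k0 with h | h
  · have h1 : (1 - 1 / β) ^ k0 ≤ (1 - 1 / β) ^ k := pow_le_pow_of_le_one hq0.le hq1.le h.le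
    have h2 : r k ≤ r 0 := hanti 0 k (Nat.zero_le _)
    rw [div_mul_eq_mul_div, le_div_iff₀ (by positivity)]
    nlinarith [pow_pos hq0 k, pow_pos hq0 k0, hpos 0]
  · obtain ⟨n, rfl⟩ := Nat.exists_eq_add_of_le h
    have h1 := hiter n
    have h2 : r k0 ≤ r 0 := hanti 0 k0 (Nat.zero_le _)
    have hne : (1 - 1 / β) ^ k0 ≠ 0 := ne_of_gt (pow_pos hq0 k0)
    have : (r 0 / (1 - 1 / β) ^ k0) * (1 - 1 / β) ^ (k0 + n) = r 0 * (1 - 1 / β) ^ n := by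
      rw [pow_add, div_mul_eq_mul_div, mul_comm ((1 - 1 / β) ^ k0), ← mul_assoc,
        mul_div_assoc, div_self hne, mul_one]
    rw [this]
    nlinarith [pow_pos hq0 n]
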